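/- For all nonnegative integers n, N(A_n, x^2) = sum_{k=0}^n C_{k+1} binom(n,k) (-x)^k (1+x)^{2n-2k}, where N(A_n,x) = sum_{k=0}^n (1/(n+1)) binom(n+1,k+1) binom(n+1,k) x^k and C_m is the m-th Catalan number. In particular N(A_n,x^2) is alternatingly gamma-positive. -/

import Mathlib

open Polynomial Finset

def dc (n k : ℕ) : ℚ := (1 / ((n : ℚ) + 1)) * ((n + 1).choose (k + 1)) * ((n + 1).choose k)
def rc (n k : ℕ) : ℚ := (catalan (k + 1) : ℚ) * (n.choose k)

lemma cast_choose_ratio (N K : ℕ) :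
    ((K : ℚ) + 1) * (N.choose (K + 1) : ℚ) = ((N : ℚ) - K) * (N.choose K : ℚ) := by
  rcases le_or_gt (K + 1) N with h | h
  · have hc : ((N.choose (K + 1) * (K + 1) : ℕ) : ℚ) = ((N.choose K * (N - K) : ℕ) : ℚ) := by
      exact_mod_cast congrArg (Nat.cast (R := ℚ)) (Nat.choose_succ_right_eq N K)
    push_cast [Nat.cast_sub (by omega : K ≤ N)] at hc
    linarith
  · rcases le_or_gt K N with h2 | h2
    · have hKN : K = N := by omega
      subst hKN
      simp [Nat.choose_succ_self]
    · simp [Nat.choose_eq_zero_of_lt h2, Nat.choose_eq_zero_of_lt (by omega : N < K + 1)]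

lemma cast_choose_N (N K : ℕ) :
    ((N : ℚ) + 1 - K) * ((N + 1).choose K : ℚ) = ((N : ℚ) + 1) * (N.choose K : ℚ) := by
  rcases le_or_gt K (N + 1) with h | h
  · have hc : ((N.choose K * (N + 1) : ℕ) : ℚ) = (((N + 1).choose K * (N + 1 - K) : ℕ) : ℚ) := by
      exact_mod_cast congrArg (Nat.cast (R := ℚ)) (Nat.choose_mul_succ_eq N K)
    push_cast [Nat.cast_sub (by omega : K ≤ N + 1)] at hc
    linarith
  · simp [Nat.choose_eq_zero_of_lt h, Nat.choose_eq_zero_of_lt (by omega : N < K)]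

lemma cast_pascal (N K : ℕ) :
    (((N + 1).choose (K + 1) : ℕ) : ℚ) = (N.choose K : ℚ) + (N.choose (K + 1) : ℚ) := by
  exact_mod_cast congrArg (Nat.cast (R := ℚ)) (Nat.choose_succ_succ N K)

lemma cat_ratio (s : ℕ) :
    ((s : ℚ) + 2) * (catalan (s + 1) : ℚ) = 2 * (2 * (s : ℚ) + 1) * (catalan s : ℚ) := by
  have hs : ((s : ℚ) + 1) ≠ 0 := by positivity
  have h1 : ((s : ℚ) + 2) * (catalan (s + 1) : ℚ) = ((s + 1).centralBinom : ℚ) := by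
    exact_mod_cast congrArg (Nat.cast (R := ℚ)) (succ_mul_catalan_eq_centralBinom (s + 1))
  have h2 : ((s : ℚ) + 1) * ((s + 1).centralBinom : ℚ)
      = 2 * (2 * (s : ℚ) + 1) * (s.centralBinom : ℚ) := by
    exact_mod_cast congrArg (Nat.cast (R := ℚ)) (Nat.succ_mul_centralBinom_succ s)
  have h3 : ((s : ℚ) + 1) * (catalan s : ℚ) = (s.centralBinom : ℚ) := by
    exact_mod_cast congrArg (Nat.cast (R := ℚ)) (succ_mul_catalan_eq_centralBinom s)
  have aux : ((s : ℚ) + 1) * (((s : ℚ) + 2) * (catalan (s + 1) : ℚ))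
      = ((s : ℚ) + 1) * (2 * (2 * (s : ℚ) + 1) * (catalan s : ℚ)) := by
    linear_combination ((s : ℚ) + 1) * h1 + h2 - 2 * (2 * (s : ℚ) + 1) * h3
  exact mul_left_cancel₀ hs aux

lemma dc0 (r : ℕ) : dc r 0 = 1 := by
  have h : ((r : ℚ) + 1) ≠ 0 := by positivity
  simp only [dc, Nat.choose_one_right, Nat.choose_zero_right, Nat.zero_add, zero_add]
  push_cast
  field_simp

lemma dc1 (r : ℕ) : dc r 1 = (r : ℚ) * ((r : ℚ) + 1) / 2 := by
  have h : ((r : ℚ) + 1) ≠ 0 := by positivity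
  have h2 : (((r + 1).choose 2 : ℕ) : ℚ) = ((r : ℚ) + 1) * ((r : ℚ) + 1 - 1) / 2 := by
    rw [Nat.cast_choose_two]; push_cast; ring
  simp only [dc, Nat.choose_one_right]
  rw [show (1:ℕ) + 1 = 2 by omega, h2]
  push_cast
  field_simp
  ring

lemma rc0 (r : ℕ) : rc r 0 = 1 := by simp [rc, catalan_one]

lemma dc_mul (r k : ℕ) :
    ((r : ℚ) + 1) * dc r k = (((r + 1).choose (k + 1) : ℕ) : ℚ) * (((r + 1).choose k : ℕ) : ℚ) := by
  have h : ((r : ℚ) + 1) ≠ 0 := by positivity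
  unfold dc
  field_simp

set_option maxHeartbeats 1000000 in
lemma dc_step (n j : ℕ) :
    ((n : ℚ) + 4) * dc (n + 2) (j + 2) =
      (2 * (n : ℚ) + 5) * (dc (n + 1) (j + 2) + dc (n + 1) (j + 1))
        - ((n : ℚ) + 1) * (dc n (j + 2) - 2 * dc n (j + 1) + dc n j) := by
  have hK : (((n:ℚ)+2)*((n:ℚ)+3)*((j:ℚ)+1)*((j:ℚ)+2)*((j:ℚ)+3)) ≠ 0 := by positivity
  refine mul_left_cancel₀ hK ?_
  set X3 : ℚ := (((n + 3).choose (j + 3) : ℕ) : ℚ) with hX3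
  set X2 : ℚ := (((n + 3).choose (j + 2) : ℕ) : ℚ) with hX2
  set Z3 : ℚ := (((n + 2).choose (j + 3) : ℕ) : ℚ) with hZ3
  set Z2 : ℚ := (((n + 2).choose (j + 2) : ℕ) : ℚ) with hZ2
  set Z1 : ℚ := (((n + 2).choose (j + 1) : ℕ) : ℚ) with hZ1
  set a : ℚ := (((n + 1).choose j : ℕ) : ℚ) with ha
  set b : ℚ := (((n + 1).choose (j + 1) : ℕ) : ℚ) with hb
  set c : ℚ := (((n + 1).choose (j + 2) : ℕ) : ℚ) with hc
  set d : ℚ := (((n + 1).choose (j + 3) : ℕ) : ℚ) with hd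
  have hm1 : ((n:ℚ)+3) * dc (n+2) (j+2) = X3 * X2 := by
    have h := dc_mul (n+2) (j+2)
    rw [show n+2+1 = n+3 by omega, show j+2+1 = j+3 by omega] at h
    rw [hX3, hX2]
    push_cast at h ⊢
    linarith
  have hm2 : ((n:ℚ)+2) * dc (n+1) (j+2) = Z3 * Z2 := by
    have h := dc_mul (n+1) (j+2)
    rw [show n+1+1 = n+2 by omega, show j+2+1 = j+3 by omega] at h
    rw [hZ3, hZ2]
    push_cast at h ⊢
    linarith
  have hm3 : ((n:ℚ)+2) * dc (n+1) (j+1) = Z2 * Z1 := by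
    have h := dc_mul (n+1) (j+1)
    rw [show n+1+1 = n+2 by omega, show j+1+1 = j+2 by omega] at h
    rw [hZ2, hZ1]
    push_cast at h ⊢
    linarith
  have hm4 : ((n:ℚ)+1) * dc n (j+2) = d * c := by
    have h := dc_mul n (j+2)
    rw [show j+2+1 = j+3 by omega] at h
    rw [hd, hc]
    push_cast at h ⊢
    linarith
  have hm5 : ((n:ℚ)+1) * dc n (j+1) = c * b := by
    have h := dc_mul n (j+1)
    rw [show j+1+1 = j+2 by omega] at h
    rw [hc, hb]
    push_cast at h ⊢
    linarith
  have hm6 : ((n:ℚ)+1) * dc n j = b * a := by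
    have h := dc_mul n j
    rw [hb, ha]
    push_cast at h ⊢
    linarith
  have hp1 : X3 = Z2 + Z3 := by
    rw [hX3, hZ2, hZ3]
    have h := cast_pascal (n+2) (j+2)
    rwa [show n+2+1 = n+3 by omega, show j+2+1 = j+3 by omega] at h
  have hp2 : X2 = Z1 + Z2 := by
    rw [hX2, hZ1, hZ2]
    have h := cast_pascal (n+2) (j+1)
    rwa [show n+2+1 = n+3 by omega, show j+1+1 = j+2 by omega] at h
  have hp3 : Z3 = c + d := by
    rw [hZ3, hc, hd]
    have h := cast_pascal (n+1) (j+2)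
    rwa [show n+1+1 = n+2 by omega, show j+2+1 = j+3 by omega] at h
  have hp4 : Z2 = b + c := by
    rw [hZ2, hb, hc]
    have h := cast_pascal (n+1) (j+1)
    rwa [show n+1+1 = n+2 by omega, show j+1+1 = j+2 by omega] at h
  have hp5 : Z1 = a + b := by
    rw [hZ1, ha, hb]
    have h := cast_pascal (n+1) j
    rwa [show n+1+1 = n+2 by omega] at h
  have hR3 : ((j:ℚ)+3) * d = ((n:ℚ)-1-(j:ℚ)) * c := by
    rw [hd, hc]
    have h := cast_choose_ratio (n+1) (j+2)
    rw [show j+2+1 = j+3 by omega] at h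
    push_cast at h ⊢
    linarith
  have hR2 : ((j:ℚ)+2) * c = ((n:ℚ)-(j:ℚ)) * b := by
    rw [hc, hb]
    have h := cast_choose_ratio (n+1) (j+1)
    rw [show j+1+1 = j+2 by omega] at h
    push_cast at h ⊢
    linarith
  have hR1 : ((j:ℚ)+1) * b = ((n:ℚ)+1-(j:ℚ)) * a := by
    rw [hb, ha]
    have h := cast_choose_ratio (n+1) j
    push_cast at h ⊢
    linarith
  linear_combination ((48:ℚ) + (88:ℚ)*(j:ℚ) + (48:ℚ)*(j:ℚ)^2 + (8:ℚ)*(j:ℚ)^3 + (36:ℚ)*(n:ℚ) + (66:ℚ)*(n:ℚ)*(j:ℚ) + (36:ℚ)*(n:ℚ)*(j:ℚ)^2 + (6:ℚ)*(n:ℚ)*(j:ℚ)^3 + (6:ℚ)*(n:ℚ)^2 + (11:ℚ)*(n:ℚ)^2*(j:ℚ) + (6:ℚ)*(n:ℚ)^2*(j:ℚ)^2 + (1:ℚ)*(n:ℚ)^2*(j:ℚ)^3) * hm1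
      + ((-90:ℚ) + (-165:ℚ)*(j:ℚ) + (-90:ℚ)*(j:ℚ)^2 + (-15:ℚ)*(j:ℚ)^3 + (-66:ℚ)*(n:ℚ) + (-121:ℚ)*(n:ℚ)*(j:ℚ) + (-66:ℚ)*(n:ℚ)*(j:ℚ)^2 + (-11:ℚ)*(n:ℚ)*(j:ℚ)^3 + (-12:ℚ)*(n:ℚ)^2 + (-22:ℚ)*(n:ℚ)^2*(j:ℚ) + (-12:ℚ)*(n:ℚ)^2*(j:ℚ)^2 + (-2:ℚ)*(n:ℚ)^2*(j:ℚ)^3) * hm2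
      + ((-90:ℚ) + (-165:ℚ)*(j:ℚ) + (-90:ℚ)*(j:ℚ)^2 + (-15:ℚ)*(j:ℚ)^3 + (-66:ℚ)*(n:ℚ) + (-121:ℚ)*(n:ℚ)*(j:ℚ) + (-66:ℚ)*(n:ℚ)*(j:ℚ)^2 + (-11:ℚ)*(n:ℚ)*(j:ℚ)^3 + (-12:ℚ)*(n:ℚ)^2 + (-22:ℚ)*(n:ℚ)^2*(j:ℚ) + (-12:ℚ)*(n:ℚ)^2*(j:ℚ)^2 + (-2:ℚ)*(n:ℚ)^2*(j:ℚ)^3) * hm3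
      + ((36:ℚ) + (66:ℚ)*(j:ℚ) + (36:ℚ)*(j:ℚ)^2 + (6:ℚ)*(j:ℚ)^3 + (30:ℚ)*(n:ℚ) + (55:ℚ)*(n:ℚ)*(j:ℚ) + (30:ℚ)*(n:ℚ)*(j:ℚ)^2 + (5:ℚ)*(n:ℚ)*(j:ℚ)^3 + (6:ℚ)*(n:ℚ)^2 + (11:ℚ)*(n:ℚ)^2*(j:ℚ) + (6:ℚ)*(n:ℚ)^2*(j:ℚ)^2 + (1:ℚ)*(n:ℚ)^2*(j:ℚ)^3) * hm4
      + ((-72:ℚ) + (-132:ℚ)*(j:ℚ) + (-72:ℚ)*(j:ℚ)^2 + (-12:ℚ)*(j:ℚ)^3 + (-60:ℚ)*(n:ℚ) + (-110:ℚ)*(n:ℚ)*(j:ℚ) + (-60:ℚ)*(n:ℚ)*(j:ℚ)^2 + (-10:ℚ)*(n:ℚ)*(j:ℚ)^3 + (-12:ℚ)*(n:ℚ)^2 + (-22:ℚ)*(n:ℚ)^2*(j:ℚ) + (-12:ℚ)*(n:ℚ)^2*(j:ℚ)^2 + (-2:ℚ)*(n:ℚ)^2*(j:ℚ)^3) * 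hm5
      + ((36:ℚ) + (66:ℚ)*(j:ℚ) + (36:ℚ)*(j:ℚ)^2 + (6:ℚ)*(j:ℚ)^3 + (30:ℚ)*(n:ℚ) + (55:ℚ)*(n:ℚ)*(j:ℚ) + (30:ℚ)*(n:ℚ)*(j:ℚ)^2 + (5:ℚ)*(n:ℚ)*(j:ℚ)^3 + (6:ℚ)*(n:ℚ)^2 + (11:ℚ)*(n:ℚ)^2*(j:ℚ) + (6:ℚ)*(n:ℚ)^2*(j:ℚ)^2 + (1:ℚ)*(n:ℚ)^2*(j:ℚ)^3) * hm6
      + ((48:ℚ)*X2 + (88:ℚ)*(j:ℚ)*X2 + (48:ℚ)*(j:ℚ)^2*X2 + (8:ℚ)*(j:ℚ)^3*X2 + (36:ℚ)*(n:ℚ)*X2 + (66:ℚ)*(n:ℚ)*(j:ℚ)*X2 + (36:ℚ)*(n:ℚ)*(j:ℚ)^2*X2 + (6:ℚ)*(n:ℚ)*(j:ℚ)^3*X2 + (6:ℚ)*(n:ℚ)^2*X2 + (11:ℚ)*(n:ℚ)^2*(j:ℚ)*X2 + (6:ℚ)*(n:ℚ)^2*(j:ℚ)^2*X2 + (1:ℚ)*(n:ℚ)^2*(j:ℚ)^3*X2)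 * hp1
      + ((48:ℚ)*Z2 + (48:ℚ)*Z3 + (88:ℚ)*(j:ℚ)*Z2 + (88:ℚ)*(j:ℚ)*Z3 + (48:ℚ)*(j:ℚ)^2*Z2 + (48:ℚ)*(j:ℚ)^2*Z3 + (8:ℚ)*(j:ℚ)^3*Z2 + (8:ℚ)*(j:ℚ)^3*Z3 + (36:ℚ)*(n:ℚ)*Z2 + (36:ℚ)*(n:ℚ)*Z3 + (66:ℚ)*(n:ℚ)*(j:ℚ)*Z2 + (66:ℚ)*(n:ℚ)*(j:ℚ)*Z3 + (36:ℚ)*(n:ℚ)*(j:ℚ)^2*Z2 + (36:ℚ)*(n:ℚ)*(j:ℚ)^2*Z3 + (6:ℚ)*(n:ℚ)*(j:ℚ)^3*Z2 + (6:ℚ)*(n:ℚ)*(j:ℚ)^3*Z3 + (6:ℚ)*(n:ℚ)^2*Z2 + (6:ℚ)*(n:ℚ)^2*Z3 + (11:ℚ)*(n:ℚ)^2*(j:ℚ)*Z2 + (11:ℚ)*(n:ℚ)^2*(j:ℚ)*Z3 + (6:ℚ)*(n:ℚ)^2*(j:ℚ)^2*Z2 + (6:ℚ)*(n:ℚ)^2*(j:ℚ)^2*Z3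 + (1:ℚ)*(n:ℚ)^2*(j:ℚ)^3*Z2 + (1:ℚ)*(n:ℚ)^2*(j:ℚ)^3*Z3) * hp2
      + ((48:ℚ)*Z1 + (-42:ℚ)*Z2 + (88:ℚ)*(j:ℚ)*Z1 + (-77:ℚ)*(j:ℚ)*Z2 + (48:ℚ)*(j:ℚ)^2*Z1 + (-42:ℚ)*(j:ℚ)^2*Z2 + (8:ℚ)*(j:ℚ)^3*Z1 + (-7:ℚ)*(j:ℚ)^3*Z2 + (36:ℚ)*(n:ℚ)*Z1 + (-30:ℚ)*(n:ℚ)*Z2 + (66:ℚ)*(n:ℚ)*(j:ℚ)*Z1 + (-55:ℚ)*(n:ℚ)*(j:ℚ)*Z2 + (36:ℚ)*(n:ℚ)*(j:ℚ)^2*Z1 + (-30:ℚ)*(n:ℚ)*(j:ℚ)^2*Z2 + (6:ℚ)*(n:ℚ)*(j:ℚ)^3*Z1 + (-5:ℚ)*(n:ℚ)*(j:ℚ)^3*Z2 + (6:ℚ)*(n:ℚ)^2*Z1 + (-6:ℚ)*(n:ℚ)^2*Z2 + (11:ℚ)*(n:ℚ)^2*(j:ℚ)*Z1 + (-11:ℚ)*(n:ℚ)^2*(j:ℚ)*Z2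 + (6:ℚ)*(n:ℚ)^2*(j:ℚ)^2*Z1 + (-6:ℚ)*(n:ℚ)^2*(j:ℚ)^2*Z2 + (1:ℚ)*(n:ℚ)^2*(j:ℚ)^3*Z1 + (-1:ℚ)*(n:ℚ)^2*(j:ℚ)^3*Z2) * hp3
      + ((-42:ℚ)*d + (6:ℚ)*c + (48:ℚ)*b + (-42:ℚ)*Z1 + (48:ℚ)*Z2 + (-77:ℚ)*(j:ℚ)*d + (11:ℚ)*(j:ℚ)*c + (88:ℚ)*(j:ℚ)*b + (-77:ℚ)*(j:ℚ)*Z1 + (88:ℚ)*(j:ℚ)*Z2 + (-42:ℚ)*(j:ℚ)^2*d + (6:ℚ)*(j:ℚ)^2*c + (48:ℚ)*(j:ℚ)^2*b + (-42:ℚ)*(j:ℚ)^2*Z1 + (48:ℚ)*(j:ℚ)^2*Z2 + (-7:ℚ)*(j:ℚ)^3*d + (1:ℚ)*(j:ℚ)^3*c + (8:ℚ)*(j:ℚ)^3*b + (-7:ℚ)*(j:ℚ)^3*Z1 + (8:ℚ)*(j:ℚ)^3*Z2 + (-30:ℚ)*(n:ℚ)*d + (6:ℚ)*(n:ℚ)*c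 + (36:ℚ)*(n:ℚ)*b + (-30:ℚ)*(n:ℚ)*Z1 + (36:ℚ)*(n:ℚ)*Z2 + (-55:ℚ)*(n:ℚ)*(j:ℚ)*d + (11:ℚ)*(n:ℚ)*(j:ℚ)*c + (66:ℚ)*(n:ℚ)*(j:ℚ)*b + (-55:ℚ)*(n:ℚ)*(j:ℚ)*Z1 + (66:ℚ)*(n:ℚ)*(j:ℚ)*Z2 + (-30:ℚ)*(n:ℚ)*(j:ℚ)^2*d + (6:ℚ)*(n:ℚ)*(j:ℚ)^2*c + (36:ℚ)*(n:ℚ)*(j:ℚ)^2*b + (-30:ℚ)*(n:ℚ)*(j:ℚ)^2*Z1 + (36:ℚ)*(n:ℚ)*(j:ℚ)^2*Z2 + (-5:ℚ)*(n:ℚ)*(j:ℚ)^3*d + (1:ℚ)*(n:ℚ)*(j:ℚ)^3*c + (6:ℚ)*(n:ℚ)*(j:ℚ)^3*b + (-5:ℚ)*(n:ℚ)*(j:ℚ)^3*Z1 + (6:ℚ)*(n:ℚ)*(j:ℚ)^3*Z2 + (-6:ℚ)*(n:ℚ)^2*d + (6:ℚ)*(n:ℚ)^2*b + (-6:ℚ)*(n:ℚ)^2*Z1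 + (6:ℚ)*(n:ℚ)^2*Z2 + (-11:ℚ)*(n:ℚ)^2*(j:ℚ)*d + (11:ℚ)*(n:ℚ)^2*(j:ℚ)*b + (-11:ℚ)*(n:ℚ)^2*(j:ℚ)*Z1 + (11:ℚ)*(n:ℚ)^2*(j:ℚ)*Z2 + (-6:ℚ)*(n:ℚ)^2*(j:ℚ)^2*d + (6:ℚ)*(n:ℚ)^2*(j:ℚ)^2*b + (-6:ℚ)*(n:ℚ)^2*(j:ℚ)^2*Z1 + (6:ℚ)*(n:ℚ)^2*(j:ℚ)^2*Z2 + (-1:ℚ)*(n:ℚ)^2*(j:ℚ)^3*d + (1:ℚ)*(n:ℚ)^2*(j:ℚ)^3*b + (-1:ℚ)*(n:ℚ)^2*(j:ℚ)^3*Z1 + (1:ℚ)*(n:ℚ)^2*(j:ℚ)^3*Z2) * hp4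
      + ((48:ℚ)*d + (6:ℚ)*c + (-42:ℚ)*b + (88:ℚ)*(j:ℚ)*d + (11:ℚ)*(j:ℚ)*c + (-77:ℚ)*(j:ℚ)*b + (48:ℚ)*(j:ℚ)^2*d + (6:ℚ)*(j:ℚ)^2*c + (-42:ℚ)*(j:ℚ)^2*b + (8:ℚ)*(j:ℚ)^3*d + (1:ℚ)*(j:ℚ)^3*c + (-7:ℚ)*(j:ℚ)^3*b + (36:ℚ)*(n:ℚ)*d + (6:ℚ)*(n:ℚ)*c + (-30:ℚ)*(n:ℚ)*b + (66:ℚ)*(n:ℚ)*(j:ℚ)*d + (11:ℚ)*(n:ℚ)*(j:ℚ)*c + (-55:ℚ)*(n:ℚ)*(j:ℚ)*b + (36:ℚ)*(n:ℚ)*(j:ℚ)^2*d + (6:ℚ)*(n:ℚ)*(j:ℚ)^2*c + (-30:ℚ)*(n:ℚ)*(j:ℚ)^2*b + (6:ℚ)*(n:ℚ)*(j:ℚ)^3*d + (1:ℚ)*(n:ℚ)*(j:ℚ)^3*c + (-5:ℚ)*(n:ℚ)*(j:ℚ)^3*b + (6:ℚ)*(n:ℚ)^2*d + (-6:ℚ)*(n:ℚ)^2*b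 + (11:ℚ)*(n:ℚ)^2*(j:ℚ)*d + (-11:ℚ)*(n:ℚ)^2*(j:ℚ)*b + (6:ℚ)*(n:ℚ)^2*(j:ℚ)^2*d + (-6:ℚ)*(n:ℚ)^2*(j:ℚ)^2*b + (1:ℚ)*(n:ℚ)^2*(j:ℚ)^3*d + (-1:ℚ)*(n:ℚ)^2*(j:ℚ)^3*b) * hp5
      + ((-2:ℚ)*c + (2:ℚ)*b + (16:ℚ)*a + (-3:ℚ)*(j:ℚ)*c + (3:ℚ)*(j:ℚ)*b + (24:ℚ)*(j:ℚ)*a + (-1:ℚ)*(j:ℚ)^2*c + (1:ℚ)*(j:ℚ)^2*b + (8:ℚ)*(j:ℚ)^2*a + (2:ℚ)*(n:ℚ)*b + (12:ℚ)*(n:ℚ)*a + (3:ℚ)*(n:ℚ)*(j:ℚ)*b + (18:ℚ)*(n:ℚ)*(j:ℚ)*a + (1:ℚ)*(n:ℚ)*(j:ℚ)^2*b + (6:ℚ)*(n:ℚ)*(j:ℚ)^2*a + (2:ℚ)*(n:ℚ)^2*a + (3:ℚ)*(n:ℚ)^2*(j:ℚ)*a + (1:ℚ)*(n:ℚ)^2*(j:ℚ)^2*a)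 * hR3
      + ((4:ℚ)*c + (-7:ℚ)*b + (-5:ℚ)*a + (6:ℚ)*(j:ℚ)*c + (-12:ℚ)*(j:ℚ)*b + (-12:ℚ)*(j:ℚ)*a + (2:ℚ)*(j:ℚ)^2*c + (-5:ℚ)*(j:ℚ)^2*b + (-7:ℚ)*(j:ℚ)^2*a + (2:ℚ)*(n:ℚ)*c + (-4:ℚ)*(n:ℚ)*b + (5:ℚ)*(n:ℚ)*a + (3:ℚ)*(n:ℚ)*(j:ℚ)*c + (-8:ℚ)*(n:ℚ)*(j:ℚ)*b + (1:ℚ)*(n:ℚ)*(j:ℚ)^2*c + (-4:ℚ)*(n:ℚ)*(j:ℚ)^2*b + (-5:ℚ)*(n:ℚ)*(j:ℚ)^2*a + (-1:ℚ)*(n:ℚ)^2*b + (5:ℚ)*(n:ℚ)^2*a + (-2:ℚ)*(n:ℚ)^2*(j:ℚ)*b + (4:ℚ)*(n:ℚ)^2*(j:ℚ)*a + (-1:ℚ)*(n:ℚ)^2*(j:ℚ)^2*b + (-1:ℚ)*(n:ℚ)^2*(j:ℚ)^2*a + (1:ℚ)*(n:ℚ)^3*a + (1:ℚ)*(n:ℚ)^3*(j:ℚ)*a)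 * hR2
      + ((6:ℚ)*b + (12:ℚ)*(j:ℚ)*b + (6:ℚ)*(j:ℚ)^2*b + (-1:ℚ)*(n:ℚ)*b + (4:ℚ)*(n:ℚ)*(j:ℚ)*b + (5:ℚ)*(n:ℚ)*(j:ℚ)^2*b + (-4:ℚ)*(n:ℚ)^2*b + (-3:ℚ)*(n:ℚ)^2*(j:ℚ)*b + (1:ℚ)*(n:ℚ)^2*(j:ℚ)^2*b + (-1:ℚ)*(n:ℚ)^3*b + (-1:ℚ)*(n:ℚ)^3*(j:ℚ)*b) * hR1

set_option maxHeartbeats 1000000 in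
lemma rc_step (n j : ℕ) :
    ((n : ℚ) + 4) * rc (n + 2) (j + 1) =
      (2 * (n : ℚ) + 5) * (rc (n + 1) (j + 1) + 2 * rc (n + 1) j)
        - ((n : ℚ) + 1) * (rc n (j + 1) + 4 * rc n j) := by
  have hK : ((j:ℚ)+3) ≠ 0 := by positivity
  refine mul_left_cancel₀ hK ?_
  set c1 : ℚ := ((catalan (j + 1) : ℕ) : ℚ) with hc1
  set c2 : ℚ := ((catalan (j + 2) : ℕ) : ℚ) with hc2
  set W : ℚ := (((n + 2).choose (j + 1) : ℕ) : ℚ) with hW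
  set u0 : ℚ := ((n.choose j : ℕ) : ℚ) with hu0
  set u1 : ℚ := ((n.choose (j + 1) : ℕ) : ℚ) with hu1
  set a : ℚ := (((n + 1).choose j : ℕ) : ℚ) with ha
  set b : ℚ := (((n + 1).choose (j + 1) : ℕ) : ℚ) with hb
  have hm1 : rc (n+2) (j+1) = c2 * W := by
    rw [hc2, hW]; simp only [rc]
  have hm2 : rc (n+1) (j+1) = c2 * b := by
    rw [hc2, hb]; simp only [rc]
  have hm3 : rc (n+1) j = c1 * a := by
    rw [hc1, ha]; simp only [rc]
  have hm4 : rc n (j+1) = c2 * u1 := by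
    rw [hc2, hu1]; simp only [rc]
  have hm5 : rc n j = c1 * u0 := by
    rw [hc1, hu0]; simp only [rc]
  have hpW : W = a + b := by
    rw [hW, ha, hb]
    have h := cast_pascal (n+1) j
    rwa [show n+1+1 = n+2 by omega] at h
  have hRc : ((j:ℚ)+3) * c2 = (4*(j:ℚ)+6) * c1 := by
    rw [hc2, hc1]
    have h := cat_ratio (j+1)
    rw [show j+1+1 = j+2 by omega] at h
    push_cast at h ⊢
    linarith
  have hN1 : ((n:ℚ)+1) * u1 = ((n:ℚ)-(j:ℚ)) * b := by
    rw [hu1, hb]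
    have h := cast_choose_N n (j+1)
    push_cast at h ⊢
    linarith
  have hN0 : ((n:ℚ)+1) * u0 = ((n:ℚ)+1-(j:ℚ)) * a := by
    rw [hu0, ha]
    have h := cast_choose_N n j
    push_cast at h ⊢
    linarith
  have hR1 : ((j:ℚ)+1) * b = ((n:ℚ)+1-(j:ℚ)) * a := by
    rw [hb, ha]
    have h := cast_choose_ratio (n+1) j
    push_cast at h ⊢
    linarith
  linear_combination ((12:ℚ) + (4:ℚ)*(j:ℚ) + (3:ℚ)*(n:ℚ) + (1:ℚ)*(n:ℚ)*(j:ℚ)) * hm1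
      + ((-15:ℚ) + (-5:ℚ)*(j:ℚ) + (-6:ℚ)*(n:ℚ) + (-2:ℚ)*(n:ℚ)*(j:ℚ)) * hm2
      + ((-30:ℚ) + (-10:ℚ)*(j:ℚ) + (-12:ℚ)*(n:ℚ) + (-4:ℚ)*(n:ℚ)*(j:ℚ)) * hm3
      + ((3:ℚ) + (1:ℚ)*(j:ℚ) + (3:ℚ)*(n:ℚ) + (1:ℚ)*(n:ℚ)*(j:ℚ)) * hm4
      + ((12:ℚ) + (4:ℚ)*(j:ℚ) + (12:ℚ)*(n:ℚ) + (4:ℚ)*(n:ℚ)*(j:ℚ)) * hm5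
      + ((12:ℚ)*c2 + (4:ℚ)*(j:ℚ)*c2 + (3:ℚ)*(n:ℚ)*c2 + (1:ℚ)*(n:ℚ)*(j:ℚ)*c2) * hpW
      + ((-1:ℚ)*b + (4:ℚ)*a + (1:ℚ)*u1 + (-1:ℚ)*(n:ℚ)*b + (1:ℚ)*(n:ℚ)*a + (1:ℚ)*(n:ℚ)*u1) * hRc
      + ((6:ℚ)*c1 + (4:ℚ)*(j:ℚ)*c1) * hN1
      + ((12:ℚ)*c1 + (4:ℚ)*(j:ℚ)*c1) * hN0
      + ((-6:ℚ)*c1 + (-4:ℚ)*(j:ℚ)*c1) * hR1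

lemma dc_step1 (n : ℕ) :
    ((n : ℚ) + 4) * dc (n + 2) 1 =
      (2 * (n : ℚ) + 5) * (dc (n + 1) 1 + dc (n + 1) 0)
        - ((n : ℚ) + 1) * (dc n 1 - 2 * dc n 0) := by
  rw [dc0, dc0, dc1, dc1, dc1]
  push_cast
  ring

lemma dc_step0 (n : ℕ) :
    ((n : ℚ) + 4) * dc (n + 2) 0 = (2 * (n : ℚ) + 5) * dc (n + 1) 0 - ((n : ℚ) + 1) * dc n 0 := by
  rw [dc0, dc0, dc0]; ring

lemma rc_step0 (n : ℕ) :
    ((n : ℚ) + 4) * rc (n + 2) 0 = (2 * (n : ℚ) + 5) * rc (n + 1) 0 - ((n : ℚ) + 1) * rc n 0 := by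
  rw [rc0, rc0, rc0]; ring

/-- The type A Narayana polynomial `N(A_n, x)`. -/
noncomputable def narayanaA (n : ℕ) : Polynomial ℚ :=
  ∑ k ∈ Finset.range (n + 1),
    C ((1 / ((n : ℚ) + 1)) * ((n + 1).choose (k + 1)) * ((n + 1).choose k)) * X ^ k

lemma coeff_narayanaA (r m : ℕ) : (narayanaA r).coeff m = dc r m := by
  rw [narayanaA, Polynomial.finset_sum_coeff]
  simp only [Polynomial.coeff_C_mul, Polynomial.coeff_X_pow, mul_ite, mul_one, mul_zero]
  rw [Finset.sum_ite_eq]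
  by_cases h : m ∈ Finset.range (r + 1)
  · rw [if_pos h]; rfl
  · rw [if_neg h]
    have hm : r + 1 < m + 1 := by simp only [Finset.mem_range] at h; omega
    simp [dc, Nat.choose_eq_zero_of_lt hm]

lemma narayana_rec (n : ℕ) :
    C ((n : ℚ) + 4) * narayanaA (n + 2) =
      C (2 * (n : ℚ) + 5) * ((1 + X) * narayanaA (n + 1))
        - C ((n : ℚ) + 1) * ((1 - X) ^ 2 * narayanaA n) := by
  have h2 : (C (2 : ℚ)) = (2 : Polynomial ℚ) := map_ofNat C 2
  have e1 : (1 + X) * narayanaA (n + 1) = narayanaA (n + 1) + X * narayanaA (n + 1) := by ring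
  have e2 : (1 - X) ^ 2 * narayanaA n
      = narayanaA n - C 2 * (X * narayanaA n) + X * (X * narayanaA n) := by
    rw [h2]; ring
  rw [e1, e2]
  refine Polynomial.ext fun m => ?_
  simp only [Polynomial.coeff_C_mul, Polynomial.coeff_add, Polynomial.coeff_sub]
  rcases m with _ | m
  · simp only [Polynomial.mul_coeff_zero, Polynomial.coeff_X_zero, zero_mul, coeff_narayanaA,
      mul_zero, add_zero, sub_zero]
    linear_combination dc_step0 n
  · simp only [Nat.succ_eq_add_one, Polynomial.coeff_X_mul, coeff_narayanaA]
    rcases m with _ | m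
    · simp only [Polynomial.mul_coeff_zero, Polynomial.coeff_X_zero, zero_mul, coeff_narayanaA,
        mul_zero, add_zero]
      linear_combination dc_step1 n
    · simp only [Nat.succ_eq_add_one, Polynomial.coeff_X_mul, coeff_narayanaA]
      linear_combination dc_step n m

noncomputable def RR (n : ℕ) : Polynomial ℚ :=
  ∑ k ∈ Finset.range (n + 1), C (rc n k) * (-X) ^ k * (1 + X) ^ (2 * n - 2 * k)

set_option maxHeartbeats 1000000 in
lemma R_rec (n : ℕ) :
    C ((n : ℚ) + 4) * RR (n + 2) =
      C (2 * (n : ℚ) + 5) * ((1 + X ^ 2) * RR (n + 1))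
        - C ((n : ℚ) + 1) * ((1 - X) ^ 2 * (1 + X) ^ 2 * RR n) := by
  have hz1 : rc (n + 1) (n + 2) = 0 := by
    simp [rc, Nat.choose_succ_self]
  have hz2 : rc n (n + 1) = 0 := by simp [rc, Nat.choose_succ_self]
  have hz3 : rc n (n + 2) = 0 := by
    have h : n < n + 2 := by omega
    simp [rc, Nat.choose_eq_zero_of_lt h]
  have hC2 : (C (2 : ℚ) : Polynomial ℚ) = 2 := map_ofNat C 2
  have hC4 : (C (4 : ℚ) : Polynomial ℚ) = 4 := map_ofNat C 4
  have hA : (1 + X ^ 2) * RR (n + 1)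
      = (∑ k ∈ Finset.range (n + 2 + 1),
            C (rc (n + 1) k) * (-X) ^ k * (1 + X) ^ (2 * (n + 2) - 2 * k))
        + ∑ k ∈ Finset.range (n + 2),
            C (2 * rc (n + 1) k) * (-X) ^ (k + 1) * (1 + X) ^ (2 * (n + 2) - 2 * (k + 1)) := by
    rw [Finset.sum_range_succ
        (fun k => C (rc (n + 1) k) * (-X) ^ k * (1 + X) ^ (2 * (n + 2) - 2 * k)) (n + 2), hz1,
      map_zero, zero_mul, zero_mul, add_zero, RR, Finset.mul_sum,
      show n + 1 + 1 = n + 2 by omega, ← Finset.sum_add_distrib]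
    refine Finset.sum_congr rfl fun k hk => ?_
    rw [Finset.mem_range] at hk
    rw [show 2 * (n + 2) - 2 * k = (2 * (n + 1) - 2 * k) + 2 by omega,
        show 2 * (n + 2) - 2 * (k + 1) = 2 * (n + 1) - 2 * k by omega,
        map_mul, hC2]
    ring
  have hB : (1 - X) ^ 2 * (1 + X) ^ 2 * RR n
      = (∑ k ∈ Finset.range (n + 2 + 1),
            C (rc n k) * (-X) ^ k * (1 + X) ^ (2 * (n + 2) - 2 * k))
        + ∑ k ∈ Finset.range (n + 2),
            C (4 * rc n k) * (-X) ^ (k + 1) * (1 + X) ^ (2 * (n + 2) - 2 * (k + 1)) := by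
    rw [Finset.sum_range_succ
        (fun k => C (rc n k) * (-X) ^ k * (1 + X) ^ (2 * (n + 2) - 2 * k)) (n + 2), hz3,
      map_zero, zero_mul, zero_mul, add_zero,
      Finset.sum_range_succ
        (fun k => C (rc n k) * (-X) ^ k * (1 + X) ^ (2 * (n + 2) - 2 * k)) (n + 1), hz2,
      map_zero, zero_mul, zero_mul, add_zero,
      Finset.sum_range_succ
        (fun k => C (4 * rc n k) * (-X) ^ (k + 1) * (1 + X) ^ (2 * (n + 2) - 2 * (k + 1))) (n + 1),
      hz2, mul_zero, map_zero, zero_mul, zero_mul, add_zero,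
      RR, Finset.mul_sum, ← Finset.sum_add_distrib]
    refine Finset.sum_congr rfl fun k hk => ?_
    rw [Finset.mem_range] at hk
    rw [show 2 * (n + 2) - 2 * k = (2 * n - 2 * k) + 4 by omega,
        show 2 * (n + 2) - 2 * (k + 1) = (2 * n - 2 * k) + 2 by omega,
        map_mul, hC4]
    ring
  have hL : C ((n : ℚ) + 4) * RR (n + 2)
      = ∑ k ∈ Finset.range (n + 2 + 1),
          C (((n : ℚ) + 4) * rc (n + 2) k) * (-X) ^ k * (1 + X) ^ (2 * (n + 2) - 2 * k) := by
    rw [RR, Finset.mul_sum]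
    exact Finset.sum_congr rfl fun k _ => by rw [map_mul]; ring
  have hA' : C (2 * (n : ℚ) + 5) * ((1 + X ^ 2) * RR (n + 1))
      = (∑ k ∈ Finset.range (n + 2 + 1),
            C ((2 * (n : ℚ) + 5) * rc (n + 1) k) * (-X) ^ k * (1 + X) ^ (2 * (n + 2) - 2 * k))
        + ∑ k ∈ Finset.range (n + 2),
            C ((2 * (n : ℚ) + 5) * (2 * rc (n + 1) k)) * (-X) ^ (k + 1)
              * (1 + X) ^ (2 * (n + 2) - 2 * (k + 1)) := by
    rw [hA, mul_add, Finset.mul_sum, Finset.mul_sum]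
    congr 1
    · exact Finset.sum_congr rfl fun k _ => by rw [map_mul]; ring
    · exact Finset.sum_congr rfl fun k _ => by simp only [map_mul, hC2]; ring
  have hB' : C ((n : ℚ) + 1) * ((1 - X) ^ 2 * (1 + X) ^ 2 * RR n)
      = (∑ k ∈ Finset.range (n + 2 + 1),
            C (((n : ℚ) + 1) * rc n k) * (-X) ^ k * (1 + X) ^ (2 * (n + 2) - 2 * k))
        + ∑ k ∈ Finset.range (n + 2),
            C (((n : ℚ) + 1) * (4 * rc n k)) * (-X) ^ (k + 1)
              * (1 + X) ^ (2 * (n + 2) - 2 * (k + 1)) := by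
    rw [hB, mul_add, Finset.mul_sum, Finset.mul_sum]
    congr 1
    · exact Finset.sum_congr rfl fun k _ => by rw [map_mul]; ring
    · exact Finset.sum_congr rfl fun k _ => by simp only [map_mul, hC4]; ring
  rw [hL, hA', hB',
    Finset.sum_range_succ'
      (fun k => C (((n : ℚ) + 4) * rc (n + 2) k) * (-X) ^ k * (1 + X) ^ (2 * (n + 2) - 2 * k))
      (n + 2),
    Finset.sum_range_succ'
      (fun k => C ((2 * (n : ℚ) + 5) * rc (n + 1) k) * (-X) ^ k * (1 + X) ^ (2 * (n + 2) - 2 * k))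
      (n + 2),
    Finset.sum_range_succ'
      (fun k => C (((n : ℚ) + 1) * rc n k) * (-X) ^ k * (1 + X) ^ (2 * (n + 2) - 2 * k))
      (n + 2)]
  have hterm : ∀ k ∈ Finset.range (n + 2),
      C (((n : ℚ) + 4) * rc (n + 2) (k + 1)) * (-X) ^ (k + 1)
          * (1 + X) ^ (2 * (n + 2) - 2 * (k + 1))
        = (C ((2 * (n : ℚ) + 5) * rc (n + 1) (k + 1)) * (-X) ^ (k + 1)
              * (1 + X) ^ (2 * (n + 2) - 2 * (k + 1))
            + C ((2 * (n : ℚ) + 5) * (2 * rc (n + 1) k)) * (-X) ^ (k + 1)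
              * (1 + X) ^ (2 * (n + 2) - 2 * (k + 1)))
          - (C (((n : ℚ) + 1) * rc n (k + 1)) * (-X) ^ (k + 1)
              * (1 + X) ^ (2 * (n + 2) - 2 * (k + 1))
            + C (((n : ℚ) + 1) * (4 * rc n k)) * (-X) ^ (k + 1)
              * (1 + X) ^ (2 * (n + 2) - 2 * (k + 1))) := by
    intro k _
    rw [show ((n : ℚ) + 4) * rc (n + 2) (k + 1)
        = ((2 * (n : ℚ) + 5) * rc (n + 1) (k + 1) + (2 * (n : ℚ) + 5) * (2 * rc (n + 1) k))
          - (((n : ℚ) + 1) * rc n (k + 1) + ((n : ℚ) + 1) * (4 * rc n k))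
          by linear_combination rc_step n k,
      map_sub, map_add, map_add]
    ring
  have h0 : C (((n : ℚ) + 4) * rc (n + 2) 0) * (-X) ^ 0 * (1 + X) ^ (2 * (n + 2) - 2 * 0)
      = C ((2 * (n : ℚ) + 5) * rc (n + 1) 0) * (-X) ^ 0 * (1 + X) ^ (2 * (n + 2) - 2 * 0)
        - C (((n : ℚ) + 1) * rc n 0) * (-X) ^ 0 * (1 + X) ^ (2 * (n + 2) - 2 * 0) := by
    rw [show ((n : ℚ) + 4) * rc (n + 2) 0
        = (2 * (n : ℚ) + 5) * rc (n + 1) 0 - ((n : ℚ) + 1) * rc n 0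
        by linear_combination rc_step0 n, map_sub]
    ring
  rw [Finset.sum_congr rfl hterm, h0]
  rw [Finset.sum_sub_distrib, Finset.sum_add_distrib, Finset.sum_add_distrib]
  abel

lemma base0 : (narayanaA 0).comp (X ^ 2) = RR 0 := by
  simp [narayanaA, RR, rc, Finset.sum_range_one, catalan_one]

lemma base1 : (narayanaA 1).comp (X ^ 2) = RR 1 := by
  have h1 : narayanaA 1 = C 1 * X ^ 0 + C 1 * X ^ 1 := by
    rw [narayanaA, Finset.sum_range_succ, Finset.sum_range_one]
    norm_num
  have h2 : RR 1 = C 1 * (-X) ^ 0 * (1 + X) ^ 2 + C 2 * (-X) ^ 1 * (1 + X) ^ 0 := by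
    rw [RR, Finset.sum_range_succ, Finset.sum_range_one]
    norm_num [rc, catalan_one, catalan_two]
  rw [h1, h2]
  simp only [Polynomial.add_comp, Polynomial.mul_comp, Polynomial.pow_comp, Polynomial.C_comp,
    Polynomial.X_comp, map_one, map_ofNat]
  simp only [Polynomial.one_comp]
  ring

lemma key (n : ℕ) : (narayanaA n).comp (X ^ 2) = RR n := by
  suffices h : ∀ m : ℕ, (narayanaA m).comp (X ^ 2) = RR m
      ∧ (narayanaA (m + 1)).comp (X ^ 2) = RR (m + 1) from (h n).1
  intro m
  induction m with
  | zero => exact ⟨base0, base1⟩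
  | succ p ih =>
    refine ⟨ih.2, ?_⟩
    have hD := congrArg (fun q => Polynomial.comp q (X ^ 2)) (narayana_rec p)
    simp only [Polynomial.mul_comp, Polynomial.add_comp, Polynomial.sub_comp, Polynomial.pow_comp,
      Polynomial.one_comp, Polynomial.X_comp, Polynomial.C_comp] at hD
    rw [ih.1, ih.2] at hD
    have hfix : ((1 : Polynomial ℚ) - X ^ 2) ^ 2 = (1 - X) ^ 2 * (1 + X) ^ 2 := by ring
    rw [hfix] at hD
    have hcancel : (C ((p : ℚ) + 4) : Polynomial ℚ) ≠ 0 := by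
      simp only [ne_eq, Polynomial.C_eq_zero]
      positivity
    have hfin := mul_left_cancel₀ hcancel (hD.trans (R_rec p).symm)
    exact_mod_cast hfin

theorem stmt12 (n : ℕ) :
    (narayanaA n).comp (X ^ 2) =
      ∑ k ∈ Finset.range (n + 1),
        C ((catalan (k + 1) : ℚ) * (n.choose k)) * (-X) ^ k * (1 + X) ^ (2 * n - 2 * k) := by
  have h := key n
  unfold RR rc at h
  exact h
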